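/- Fix λ ≥ 0. Let (K_n) be a sequence of reals with K_n ≥ 1 and K_n → ∞, and suppose for each n that φ_n ∈ W × ℝ minimizes the penalty loss L^{K_n}(φ) = J^λ(φ) + (K_n − 1) · Σ_{i=1}^m max(0, G_i − V_φ(s_i))² over all of W × ℝ. If φ* is a cluster point of the sequence (φ_n) in W × ℝ, then φ* is a λ-regularized upper envelope: φ* is feasible (V_{φ*}(s_i) ≥ G_i for all i) and J^λ(φ*) ≤ J^λ(ψ) for every feasible ψ ∈ W × ℝ. -/
import Mathlib

open Filter Topology

theorem stmt_12
    {W : Type*} [NormedAddCommGroup W] [NormedSpace ℝ W]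
    {S : Type*}
    (f : W → S → ℝ)
    (hf_cont : ∀ s : S, Continuous fun w => f w s)
    (hf_zero : ∀ s : S, f 0 s = 0)
    (m : ℕ) (hm : 0 < m)
    (s : Fin m → S) (G : Fin m → ℝ)
    (lam : ℝ) (hlam : 0 ≤ lam)
    (K : ℕ → ℝ)
    (hK_one : ∀ n : ℕ, 1 ≤ K n)
    (hK_tendsto : Filter.Tendsto K Filter.atTop Filter.atTop)
    (φ : ℕ → W × ℝ)
    (hmin : ∀ n : ℕ, ∀ ψ : W × ℝ,
      ((∑ i, (f (φ n).1 (s i) + (φ n).2 - G i) ^ 2) + lam * ‖(φ n).1‖ ^ 2)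
        + (K n - 1) * ∑ i, max 0 (G i - (f (φ n).1 (s i) + (φ n).2)) ^ 2 ≤
      ((∑ i, (f ψ.1 (s i) + ψ.2 - G i) ^ 2) + lam * ‖ψ.1‖ ^ 2)
        + (K n - 1) * ∑ i, max 0 (G i - (f ψ.1 (s i) + ψ.2)) ^ 2)
    (φstar : W × ℝ)
    (hcluster : MapClusterPt φstar Filter.atTop φ) :
    (∀ i : Fin m, G i ≤ f φstar.1 (s i) + φstar.2)
    ∧ ∀ ψ : W × ℝ, (∀ i : Fin m, G i ≤ f ψ.1 (s i) + ψ.2) →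
        (∑ i, (f φstar.1 (s i) + φstar.2 - G i) ^ 2) + lam * ‖φstar.1‖ ^ 2 ≤
          (∑ i, (f ψ.1 (s i) + ψ.2 - G i) ^ 2) + lam * ‖ψ.1‖ ^ 2 := by
  -- Define the loss J and the penalty P
  set J : W × ℝ → ℝ := fun ψ =>
    (∑ i, (f ψ.1 (s i) + ψ.2 - G i) ^ 2) + lam * ‖ψ.1‖ ^ 2 with hJdef
  set P : W × ℝ → ℝ := fun ψ =>
    ∑ i, max 0 (G i - (f ψ.1 (s i) + ψ.2)) ^ 2 with hPdef
  have hJcont : Continuous J := by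
    apply Continuous.add
    · apply continuous_finset_sum
      intro i _
      exact ((((hf_cont (s i)).comp continuous_fst).add continuous_snd).sub
        continuous_const).pow 2
    · exact continuous_const.mul ((continuous_norm.comp continuous_fst).pow 2)
  have hPcont : Continuous P := by
    apply continuous_finset_sum
    intro i _
    exact (continuous_const.max (continuous_const.sub
      (((hf_cont (s i)).comp continuous_fst).add continuous_snd))).pow 2
  have hPnonneg : ∀ ψ, 0 ≤ P ψ := fun ψ =>
    Finset.sum_nonneg fun i _ => sq_nonneg _
  have hJnonneg : ∀ ψ, 0 ≤ J ψ :=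
    fun ψ => add_nonneg (Finset.sum_nonneg fun i _ => sq_nonneg _)
      (mul_nonneg hlam (sq_nonneg _))
  -- any feasible ψ has zero penalty
  have hPzero : ∀ ψ : W × ℝ, (∀ i : Fin m, G i ≤ f ψ.1 (s i) + ψ.2) → P ψ = 0 := by
    intro ψ hfe
    apply Finset.sum_eq_zero
    intro i _
    have : max 0 (G i - (f ψ.1 (s i) + ψ.2)) = 0 :=
      max_eq_left (by linarith [hfe i])
    rw [this]; ring
  -- a particular feasible point
  set b0 : ℝ := ∑ i, |G i| with hb0
  have hfeas0 : ∀ i : Fin m, G i ≤ f (0 : W) (s i) + b0 := by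
    intro i
    have h1 : |G i| ≤ b0 :=
      Finset.single_le_sum (fun j _ => abs_nonneg (G j)) (Finset.mem_univ i)
    have := le_abs_self (G i)
    rw [hf_zero (s i)]
    linarith
  set C : ℝ := J ((0 : W), b0) with hC
  have hCnonneg : 0 ≤ C := hJnonneg _
  -- key bound from minimality: J (φ n) + (K n - 1) * P (φ n) ≤ C
  have hbound : ∀ n, J (φ n) + (K n - 1) * P (φ n) ≤ C := by
    intro n
    have h := hmin n ((0 : W), b0)
    have hz : P ((0 : W), b0) = 0 := hPzero _ hfeas0
    simp only [hJdef, hPdef] at *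
    calc (∑ i, (f (φ n).1 (s i) + (φ n).2 - G i) ^ 2) + lam * ‖(φ n).1‖ ^ 2
        + (K n - 1) * ∑ i, max 0 (G i - (f (φ n).1 (s i) + (φ n).2)) ^ 2 ≤ _ := h
      _ = C := by rw [hz, mul_zero, add_zero]
  -- extract a convergent subsequence
  obtain ⟨σ, hσmono, hσtend⟩ := TopologicalSpace.FirstCountableTopology.tendsto_subseq hcluster
  have hσtop : Tendsto σ atTop atTop := hσmono.tendsto_atTop
  have hJtend : Tendsto (fun k => J (φ (σ k))) atTop (𝓝 (J φstar)) :=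
    (hJcont.continuousAt.tendsto).comp hσtend
  have hPtend : Tendsto (fun k => P (φ (σ k))) atTop (𝓝 (P φstar)) :=
    (hPcont.continuousAt.tendsto).comp hσtend
  -- penalty along the subsequence tends to 0
  have hKtend : Tendsto (fun k => K (σ k) - 1) atTop atTop :=
    tendsto_atTop_add_const_right _ (-1) (hK_tendsto.comp hσtop)
  have hPto0 : Tendsto (fun k => P (φ (σ k))) atTop (𝓝 0) := by
    apply squeeze_zero' (Eventually.of_forall fun k => hPnonneg _)
      (g := fun k => C / (K (σ k) - 1))
    · filter_upwards [hKtend.eventually_ge_atTop 1] with k hk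
      have hpos : (0:ℝ) < K (σ k) - 1 := lt_of_lt_of_le one_pos hk
      rw [le_div_iff₀ hpos]
      have := hbound (σ k)
      have := hJnonneg (φ (σ k))
      nlinarith
    · exact Tendsto.div_atTop tendsto_const_nhds hKtend
  have hPstar : P φstar = 0 := tendsto_nhds_unique hPtend hPto0
  -- feasibility of φstar
  have hfeas_star : ∀ i : Fin m, G i ≤ f φstar.1 (s i) + φstar.2 := by
    intro i
    have hterm : max 0 (G i - (f φstar.1 (s i) + φstar.2)) ^ 2 = 0 := by
      have := (Finset.sum_eq_zero_iff_of_nonneg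
        (fun j (_ : j ∈ Finset.univ) => sq_nonneg
          (max 0 (G j - (f φstar.1 (s j) + φstar.2))))).mp hPstar i (Finset.mem_univ i)
      exact this
    have h0 : max 0 (G i - (f φstar.1 (s i) + φstar.2)) = 0 := by
      have := sq_eq_zero_iff.mp hterm
      exact this
    have := le_max_right 0 (G i - (f φstar.1 (s i) + φstar.2))
    rw [h0] at this
    linarith
  refine ⟨hfeas_star, ?_⟩
  -- optimality
  intro ψ hψ
  have hJleq : ∀ n, J (φ n) ≤ J ψ := by
    intro n
    have h := hmin n ψ
    have hz : P ψ = 0 := hPzero ψ hψ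
    simp only [hJdef, hPdef] at h hz ⊢
    rw [hz, mul_zero, add_zero] at h
    have hKn : 0 ≤ K n - 1 := by linarith [hK_one n]
    have hPn : 0 ≤ P (φ n) := hPnonneg _
    simp only [hPdef] at hPn
    nlinarith
  have : J φstar ≤ J ψ :=
    le_of_tendsto hJtend (Eventually.of_forall fun k => hJleq (σ k))
  simpa only [hJdef] using this
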